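/- arXiv:2411.16218 — 3 statements merged into one kernel-verified Lean document; each statement's English description precedes it below -/
import Mathlib

section
/- For all sufficiently large t, every colouring φ: E(K^{(2)}_{n,n}) → ℕ of the edges of the complete bipartite graph with both vertex classes of size n = t^{3(t+1)} yields a canonical copy of K^{(2)}_{t,t}; in other words, the canonical Ramsey number satisfies ER(K^{(2)}_{t,t}) ≤ t^{3(t+1)}. -/
namespace CanonicalBipartite

open Finset

/-- Exponential shaving: `2·t^t ≤ t·(t-(L+1))^t` when `t` is large relative to `L`. -/
lemma pow_shave (t L : ℕ) (h1 : (L+3)*(L+1) ≤ t) (h2 : 2*3^(L+3) ≤ t) :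
    2 * t^t ≤ t * (t - (L+1))^t := by
  have hLt : L + 1 < t := by nlinarith
  set m : ℕ := t - (L+1) with hmdef
  have hmt : m + (L+1) = t := Nat.sub_add_cancel hLt.le
  have hm0 : 0 < m := by omega
  have hmR : (0:ℝ) < (m:ℝ) := by exact_mod_cast hm0
  have h1R : ((L:ℝ)+3)*((L:ℝ)+1) ≤ (t:ℝ) := by exact_mod_cast h1
  have hmtR : (m:ℝ) + ((L:ℝ)+1) = (t:ℝ) := by exact_mod_cast hmt
  set x : ℝ := ((L:ℝ)+1)/m with hxdef
  have hx0 : (0:ℝ) ≤ x := by positivity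
  have hxt : (t:ℝ) * x ≤ (L:ℝ)+3 := by
    rw [hxdef, ← mul_div_assoc, div_le_iff₀ hmR]
    nlinarith
  have htm : (t:ℝ) = (m:ℝ) * (1 + x) := by
    rw [hxdef]
    field_simp
    linarith
  have hkey : (t:ℝ)^t ≤ (3:ℝ)^(L+3) * (m:ℝ)^t := by
    have e1 : (1:ℝ) + x ≤ Real.exp x := by linarith [Real.add_one_le_exp x]
    have e2 : ((1:ℝ) + x)^t ≤ (Real.exp x)^t :=
      pow_le_pow_left₀ (by linarith) e1 t
    have e3 : (Real.exp x)^t = Real.exp ((t:ℝ)*x) := (Real.exp_nat_mul x t).symm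
    have e4 : Real.exp ((t:ℝ)*x) ≤ Real.exp ((L:ℝ)+3) := Real.exp_le_exp.mpr hxt
    have e5 : Real.exp ((L:ℝ)+3) ≤ (3:ℝ)^(L+3) := by
      have h9 : Real.exp ((L:ℝ)+3) = (Real.exp 1)^(L+3) := by
        rw [← Real.exp_nat_mul]
        norm_num
      rw [h9]
      have he : Real.exp 1 ≤ 3 := by
        have := Real.exp_one_lt_d9
        linarith
      exact pow_le_pow_left₀ (Real.exp_pos 1).le he _
    calc (t:ℝ)^t = (m:ℝ)^t * (1 + x)^t := by rw [htm, mul_pow]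
    _ ≤ (m:ℝ)^t * (3:ℝ)^(L+3) := by
        have : ((1:ℝ) + x)^t ≤ (3:ℝ)^(L+3) := by
          calc ((1:ℝ) + x)^t ≤ (Real.exp x)^t := e2
          _ = Real.exp ((t:ℝ)*x) := e3
          _ ≤ Real.exp ((L:ℝ)+3) := e4
          _ ≤ (3:ℝ)^(L+3) := e5
        exact mul_le_mul_of_nonneg_left this (by positivity)
    _ = (3:ℝ)^(L+3) * (m:ℝ)^t := by ring
  have hNat : 2 * t^t ≤ 2 * 3^(L+3) * m^t := by
    have h2R : (2:ℝ) * (t:ℝ)^t ≤ 2 * 3^(L+3) * (m:ℝ)^t := by nlinarith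
    exact_mod_cast h2R
  calc 2 * t^t ≤ 2 * 3^(L+3) * m^t := hNat
  _ ≤ t * m^t := Nat.mul_le_mul_right _ h2

/-- `(c+b)^(k+1) ≤ c^(k+1) + (k+1)·b·(c+b)^k`. -/
lemma add_pow_lower (c b : ℕ) : ∀ k : ℕ, (c+b)^(k+1) ≤ c^(k+1) + (k+1)*b*(c+b)^k
  | 0 => by simp
  | (k+1) => by
    have ih := add_pow_lower c b k
    calc (c+b)^(k+2) = (c+b) * (c+b)^(k+1) := by ring
    _ ≤ (c+b) * (c^(k+1) + (k+1)*b*(c+b)^k) := Nat.mul_le_mul_left _ ih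
    _ = c^(k+2) + b*c^(k+1) + (k+1)*b*(c+b)^(k+1) := by ring
    _ ≤ c^(k+2) + b*(c+b)^(k+1) + (k+1)*b*(c+b)^(k+1) := by
        have : c^(k+1) ≤ (c+b)^(k+1) := Nat.pow_le_pow_left (by omega) _
        have := Nat.mul_le_mul_left b this
        omega
    _ = c^(k+2) + (k+2)*b*(c+b)^(k+1) := by ring

/-- `a^(k+1) ≤ (a-b)^(k+1) + (k+1)·b·a^k` for `b ≤ a`. -/
lemma pow_sub_lower (a b : ℕ) (hb : b ≤ a) (k : ℕ) :
    a^(k+1) ≤ (a-b)^(k+1) + (k+1)*b*a^k := by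
  have ha : a = (a-b) + b := by omega
  calc a^(k+1) = ((a-b)+b)^(k+1) := by rw [← ha]
  _ ≤ (a-b)^(k+1) + (k+1)*b*((a-b)+b)^k := add_pow_lower _ _ _
  _ = (a-b)^(k+1) + (k+1)*b*a^k := by rw [← ha]

/-- Transfer a power inequality to binomial coefficients. -/
lemma choose_ineq (k a n A B : ℕ) (h : A * n ^ k ≤ B * (a + 1 - k) ^ k) :
    A * n.choose k ≤ B * a.choose k := by
  have h1 : A * n.descFactorial k ≤ B * a.descFactorial k := by
    calc A * n.descFactorial k ≤ A * n ^ k := Nat.mul_le_mul_left _ (Nat.descFactorial_le_pow n k)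
    _ ≤ B * (a + 1 - k)^k := h
    _ ≤ B * a.descFactorial k := Nat.mul_le_mul_left _ (Nat.pow_sub_le_descFactorial a k)
  rw [Nat.choose_eq_descFactorial_div_factorial, Nat.choose_eq_descFactorial_div_factorial,
      ← Nat.mul_div_assoc A (Nat.factorial_dvd_descFactorial n k),
      ← Nat.mul_div_assoc B (Nat.factorial_dvd_descFactorial a k)]
  exact Nat.div_le_div_right h1


lemma double_count {α β : Type*} (s : Finset α) (u : Finset β) (p : α → β → Prop)
    [∀ a b, Decidable (p a b)] :
    ∑ a ∈ s, (u.filter (p a)).card = ∑ b ∈ u, (s.filter (fun a => p a b)).card := by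
  simp_rw [Finset.card_filter]
  exact Finset.sum_comm

lemma exists_ge_of_sum {β : Type*} (u : Finset β) (f : β → ℕ) (Q : ℕ)
    (hu : u.Nonempty) (h : Q * u.card ≤ ∑ b ∈ u, f b) : ∃ b ∈ u, Q ≤ f b := by
  rcases Nat.eq_zero_or_pos Q with hQ | hQ
  · obtain ⟨b, hb⟩ := hu
    exact ⟨b, hb, by omega⟩
  by_contra hc
  push_neg at hc
  have hle : ∑ b ∈ u, f b ≤ u.card * (Q-1) := by
    have := Finset.sum_le_card_nsmul u f (Q-1) (fun x hx => by have := hc x hx; omega)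
    simpa [smul_eq_mul] using this
  have hcard : 0 < u.card := Finset.card_pos.mpr hu
  have : Q * u.card ≤ u.card * (Q - 1) := le_trans h hle
  rw [mul_comm] at this
  have := Nat.le_of_mul_le_mul_left this hcard
  omega

lemma harvest (t Q : ℕ) (X : Finset ℕ) (H : Finset ℕ) (C : ℕ → Finset ℕ) (m : ℕ)
    (htX : t ≤ X.card)
    (hC : ∀ y ∈ H, C y ⊆ X ∧ m ≤ (C y).card)
    (hnum : Q * X.card.choose t ≤ H.card * m.choose t) :
    ∃ T, T ⊆ X ∧ T.card = t ∧ Q ≤ (H.filter (fun y => T ⊆ C y)).card := by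
  classical
  set 𝒯 := X.powersetCard t with h𝒯
  have hTcard : 𝒯.card = X.card.choose t := Finset.card_powersetCard t X
  have key : ∀ y ∈ H, ((C y).powersetCard t) = 𝒯.filter (fun T => T ⊆ C y) := by
    intro y hy
    ext T
    simp only [Finset.mem_powersetCard, Finset.mem_filter, h𝒯]
    constructor
    · rintro ⟨hsub, hcard⟩
      exact ⟨⟨hsub.trans (hC y hy).1, hcard⟩, hsub⟩
    · rintro ⟨⟨_, hcard⟩, hsub⟩
      exact ⟨hsub, hcard⟩
  have hsum : H.card * m.choose t ≤ ∑ T ∈ 𝒯, (H.filter (fun y => T ⊆ C y)).card := by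
    rw [← double_count]
    calc H.card * m.choose t = ∑ _y ∈ H, m.choose t := by rw [Finset.sum_const, smul_eq_mul]
    _ ≤ ∑ y ∈ H, ((C y).powersetCard t).card := by
        apply Finset.sum_le_sum
        intro y hy
        rw [Finset.card_powersetCard]
        exact Nat.choose_le_choose t (hC y hy).2
    _ = ∑ y ∈ H, (𝒯.filter (fun T => T ⊆ C y)).card := by
        apply Finset.sum_congr rfl
        intro y hy
        rw [key y hy]
  have h𝒯ne : 𝒯.Nonempty := by
    rw [← Finset.card_pos, hTcard]
    exact Nat.choose_pos htX
  obtain ⟨T, hT, hQT⟩ := exists_ge_of_sum 𝒯 _ Q h𝒯ne (by rw [hTcard]; exact le_trans hnum hsum)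
  rw [h𝒯, Finset.mem_powersetCard] at hT
  exact ⟨T, hT.1, hT.2, hQT⟩

lemma exists_le_avg {β : Type*} (s : Finset β) (f : β → ℕ) (hs : s.Nonempty) :
    ∃ b ∈ s, s.card * f b ≤ ∑ x ∈ s, f x := by
  obtain ⟨b, hb, hmin⟩ := Finset.exists_min_image s f hs
  refine ⟨b, hb, ?_⟩
  calc s.card * f b = ∑ _x ∈ s, f b := by rw [Finset.sum_const, smul_eq_mul]
  _ ≤ ∑ x ∈ s, f x := Finset.sum_le_sum (fun x hx => hmin x hx)

lemma values_pigeonhole (t : ℕ) (S : Finset ℕ) (v : ℕ → ℕ)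
    (hS : (t-1)*(t-1) + 1 ≤ S.card) :
    (∃ c, t ≤ (S.filter (fun y => v y = c)).card) ∨
    (∃ S', S' ⊆ S ∧ S'.card = t ∧ Set.InjOn v ↑S') := by
  classical
  by_cases hbig : ∃ c, t ≤ (S.filter (fun y => v y = c)).card
  · exact Or.inl hbig
  push_neg at hbig
  right
  have hfib : ∀ c, (S.filter (fun y => v y = c)).card ≤ t - 1 := fun c => by
    have := hbig c; omega
  have himcard : t ≤ (S.image v).card := by
    by_contra hlt
    push_neg at hlt
    have hcount : S.card = ∑ c ∈ S.image v, (S.filter (fun y => v y = c)).card :=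
      Finset.card_eq_sum_card_fiberwise (fun x hx => Finset.mem_image_of_mem v hx)
    have h1 : S.card ≤ (S.image v).card * (t-1) := by
      rw [hcount]
      have := Finset.sum_le_card_nsmul (S.image v)
        (fun c => (S.filter (fun y => v y = c)).card) (t-1) (fun c _ => hfib c)
      simpa [smul_eq_mul] using this
    have h2 : (S.image v).card * (t-1) ≤ (t-1) * (t-1) := by
      have : (S.image v).card ≤ t - 1 := by omega
      exact Nat.mul_le_mul_right _ this
    omega
  obtain ⟨I, hIsub, hIcard⟩ := Finset.exists_subset_card_eq himcard
  have hne : ∀ c ∈ I, (S.filter (fun y => v y = c)).Nonempty := by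
    intro c hc
    have hmem := hIsub hc
    rw [Finset.mem_image] at hmem
    obtain ⟨y, hy, hvy⟩ := hmem
    exact ⟨y, Finset.mem_filter.mpr ⟨hy, hvy⟩⟩
  set g : ℕ → ℕ := fun c => if h : (S.filter (fun y => v y = c)).Nonempty
      then (S.filter (fun y => v y = c)).min' h else 0 with hg
  have hgmem : ∀ c ∈ I, g c ∈ S ∧ v (g c) = c := by
    intro c hc
    have h := hne c hc
    rw [hg]
    simp only [dif_pos h]
    have hmm := Finset.min'_mem _ h
    rw [Finset.mem_filter] at hmm
    exact hmm
  refine ⟨I.image g, ?_, ?_, ?_⟩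
  · intro y hy
    rw [Finset.mem_image] at hy
    obtain ⟨c, hc, rfl⟩ := hy
    exact (hgmem c hc).1
  · rw [Finset.card_image_of_injOn, hIcard]
    intro c1 h1 c2 h2 heq
    have e1 := (hgmem c1 h1).2
    have e2 := (hgmem c2 h2).2
    rw [← e1, ← e2, heq]
  · intro a ha b hb hv
    rw [Finset.coe_image, Set.mem_image] at ha hb
    obtain ⟨c1, h1, rfl⟩ := ha
    obtain ⟨c2, h2, rfl⟩ := hb
    rw [Finset.mem_coe] at h1 h2
    rw [(hgmem c1 h1).2, (hgmem c2 h2).2] at hv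
    rw [hv]


/-- Counting inequality for the heavy-rows case. -/
lemma num_row (t L : ℕ) (hLt : L+1 < t) (ht2 : 2 ≤ t)
    (hsh : 2 * t^t ≤ t * (t-(L+1))^t) :
    2*((t-1)*(t-1)+1) * (t^(3*t+3))^t ≤ t^(3*t+3) * (t^(3*t-1)*(t-L) + 1 - t)^t := by
  have hz : t - L = (t - (L+1)) + 1 := by omega
  set z := t - (L+1) with hzdef
  have hat : t ≤ t^(3*t-1) := by
    calc t = t^1 := (pow_one t).symm
    _ ≤ t^(3*t-1) := Nat.pow_le_pow_right (by omega) (by omega)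
  have hMr : t^(3*t-1)*(t-L) = t^(3*t-1)*z + t^(3*t-1) := by
    rw [hz]; ring
  have hW : t^(3*t-1)*z ≤ t^(3*t-1)*(t-L) + 1 - t := by
    rw [hMr]; omega
  have step1 : (t^(3*t-1)*z)^t ≤ (t^(3*t-1)*(t-L) + 1 - t)^t := Nat.pow_le_pow_left hW t
  have hQ : (t-1)*(t-1)+1 ≤ t^2 := by
    obtain ⟨r, rfl⟩ : ∃ r, t = r + 1 := ⟨t-1, by omega⟩
    simp only [Nat.add_sub_cancel, pow_two]
    nlinarith
  have q1 : (3*t+3)*t = 3*(t*t)+3*t := by ring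
  have q2 : (3*t-1)*t = 3*(t*t) - t := by
    rw [Nat.sub_mul, one_mul]
    congr 1
    ring
  have hts : t ≤ t*t := Nat.le_mul_of_pos_left t (by omega)
  have c1 : 2+(3*t+3)*t = (3*(t*t)+2*t+2)+t := by rw [q1]; omega
  have c2 : (3*t+3)+(3*t-1)*t = (3*(t*t)+2*t+2)+1 := by rw [q2]; omega
  have core : 2*t^2 * (t^(3*t+3))^t ≤ t^(3*t+3) * (t^(3*t-1)*z)^t := by
    calc 2*t^2 * (t^(3*t+3))^t = 2*(t^(2+(3*t+3)*t)) := by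
          rw [← pow_mul, pow_add]; ring
    _ = 2*(t^((3*(t*t)+2*t+2)+t)) := by rw [c1]
    _ = t^(3*(t*t)+2*t+2) * (2*t^t) := by rw [pow_add]; ring
    _ ≤ t^(3*(t*t)+2*t+2) * (t*z^t) := Nat.mul_le_mul_left _ hsh
    _ = t^((3*(t*t)+2*t+2)+1) * z^t := by rw [pow_add]; ring
    _ = t^((3*t+3)+(3*t-1)*t) * z^t := by rw [c2]
    _ = t^(3*t+3) * (t^(3*t-1)*z)^t := by rw [pow_add, mul_pow, ← pow_mul]; ring
  calc 2*((t-1)*(t-1)+1) * (t^(3*t+3))^t ≤ 2*t^2 * (t^(3*t+3))^t := by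
        have h1 := Nat.mul_le_mul_right ((t^(3*t+3))^t) (Nat.mul_le_mul_left 2 hQ)
        simpa [mul_assoc] using h1
  _ ≤ t^(3*t+3) * (t^(3*t-1)*z)^t := core
  _ ≤ t^(3*t+3) * (t^(3*t-1)*(t-L) + 1 - t)^t := Nat.mul_le_mul_left _ step1


/-- Counting inequality for the heavy-columns case. -/
lemma num_col (t : ℕ) (ht2 : 2 ≤ t) :
    ((t-1)*(t-1)+1)*t * (t^(3*t+3))^t ≤ t^(3*t+3) * (t^(3*t) + 1 - t)^t := by
  obtain ⟨k, rfl⟩ : ∃ k, t = k + 1 := ⟨t-1, by omega⟩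
  have hk1 : 1 ≤ k := by omega
  set T := k + 1 with hT
  have htMc : T ≤ T^(3*T) := by
    calc T = T^1 := (pow_one T).symm
    _ ≤ T^(3*T) := Nat.pow_le_pow_right (by omega) (by omega)
  -- pow_sub_lower: Mc^(k+1) ≤ (Mc-T)^(k+1) + (k+1)*T*Mc^k
  have hsub := pow_sub_lower (T^(3*T)) T htMc k
  -- F1 : nn * Mc^(k+1) = T^3 * nn^(k+1)
  have F1 : T^(3*T+3) * (T^(3*T))^(k+1) = T^3 * (T^(3*T+3))^(k+1) := by
    rw [← pow_mul, ← pow_mul, ← pow_add, ← pow_add]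
    congr 1
    rw [hT]; ring
  -- F2 : nn * ((k+1)*T*Mc^k) ≤ nn^(k+1)
  have F2 : T^(3*T+3) * ((k+1)*T*(T^(3*T))^k) ≤ (T^(3*T+3))^(k+1) := by
    have e1 : T^(3*T+3) * ((k+1)*T*(T^(3*T))^k) = T^((3*T+3)+1+1+(3*T)*k) := by
      rw [← pow_mul]
      rw [hT]
      calc (k+1)^(3*(k+1)+3) * ((k+1)*(k+1)*((k+1)^(3*(k+1)*k))) 
          = (k+1)^(3*(k+1)+3) * ((k+1)^1*(k+1)^1*((k+1)^(3*(k+1)*k))) := by rw [pow_one]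
      _ = (k+1)^((3*(k+1)+3)+1+1+(3*(k+1))*k) := by
            rw [← pow_add, ← pow_add, ← pow_add]
            congr 1
            ring
    rw [e1, ← pow_mul]
    apply Nat.pow_le_pow_right (by omega)
    rw [hT]
    nlinarith
  -- F3
  have F3 : ((T-1)*(T-1)+1)*T + 1 ≤ T^3 := by
    rw [hT]
    simp only [Nat.add_sub_cancel]
    nlinarith
  -- combine
  have comb : ((T-1)*(T-1)+1)*T * (T^(3*T+3))^(k+1) ≤ T^(3*T+3) * (T^(3*T) - T)^(k+1) := by
    have h1 : ((T-1)*(T-1)+1)*T * (T^(3*T+3))^(k+1) + T^(3*T+3) * ((k+1)*T*(T^(3*T))^k)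
        ≤ T^3 * (T^(3*T+3))^(k+1) := by
      calc ((T-1)*(T-1)+1)*T * (T^(3*T+3))^(k+1) + T^(3*T+3) * ((k+1)*T*(T^(3*T))^k)
          ≤ ((T-1)*(T-1)+1)*T * (T^(3*T+3))^(k+1) + (T^(3*T+3))^(k+1) := by
            exact Nat.add_le_add_left F2 _
      _ = (((T-1)*(T-1)+1)*T + 1) * (T^(3*T+3))^(k+1) := by ring
      _ ≤ T^3 * (T^(3*T+3))^(k+1) := Nat.mul_le_mul_right _ F3
    have h2 : T^3 * (T^(3*T+3))^(k+1) = T^(3*T+3) * (T^(3*T))^(k+1) := F1.symm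
    have h3 : T^(3*T+3) * (T^(3*T))^(k+1)
        ≤ T^(3*T+3) * ((T^(3*T)-T)^(k+1) + (k+1)*T*(T^(3*T))^k) := Nat.mul_le_mul_left _ hsub
    have h4 : T^(3*T+3) * ((T^(3*T)-T)^(k+1) + (k+1)*T*(T^(3*T))^k)
        = T^(3*T+3) * (T^(3*T)-T)^(k+1) + T^(3*T+3) * ((k+1)*T*(T^(3*T))^k) := by ring
    omega
  calc ((T-1)*(T-1)+1)*T * (T^(3*T+3))^(k+1) ≤ T^(3*T+3) * (T^(3*T) - T)^(k+1) := comb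
  _ ≤ T^(3*T+3) * (T^(3*T) + 1 - T)^(k+1) := by
      apply Nat.mul_le_mul_left
      apply Nat.pow_le_pow_left
      omega


/-- From a harvested constant structure, extract a monochromatic or a row-injective grid. -/
lemma const_structure (t Q : ℕ) (G R0 : Finset ℕ) (χ : ℕ → ℕ → ℕ) (C : ℕ → Finset ℕ) (v : ℕ → ℕ)
    (m : ℕ) (htG : t ≤ G.card) (hQ : (t-1)*(t-1)+1 ≤ Q)
    (hC : ∀ y ∈ R0, C y ⊆ G ∧ m ≤ (C y).card)
    (hconst : ∀ y ∈ R0, ∀ g ∈ C y, χ g y = v y)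
    (hnum : Q * G.card.choose t ≤ R0.card * m.choose t) :
    ∃ T, T ⊆ G ∧ T.card = t ∧ ∃ S, S ⊆ R0 ∧ S.card = t ∧
      ((∃ c, ∀ y ∈ S, ∀ g ∈ T, χ g y = c) ∨
       (Set.InjOn v ↑S ∧ ∀ y ∈ S, ∀ g ∈ T, χ g y = v y)) := by
  classical
  obtain ⟨T, hTG, hTcard, hQle⟩ := harvest t Q G R0 C m htG hC hnum
  set R1 := R0.filter (fun y => T ⊆ C y) with hR1
  have hR1sub : R1 ⊆ R0 := Finset.filter_subset _ _
  have hR1const : ∀ y ∈ R1, ∀ g ∈ T, χ g y = v y := by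
    intro y hy g hg
    exact hconst y (hR1sub hy) g ((Finset.mem_filter.mp hy).2 hg)
  have hcard : (t-1)*(t-1)+1 ≤ R1.card := le_trans hQ hQle
  rcases values_pigeonhole t R1 v hcard with ⟨c, hc⟩ | ⟨S, hSsub, hScard, hinj⟩
  · obtain ⟨S, hSsub, hScard⟩ := Finset.exists_subset_card_eq hc
    refine ⟨T, hTG, hTcard, S, ?_, hScard, Or.inl ⟨c, ?_⟩⟩
    · exact (hSsub.trans (Finset.filter_subset _ _)).trans hR1sub
    · intro y hy g hg
      have hyy := Finset.mem_filter.mp (hSsub hy)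
      rw [hR1const y hyy.1 g hg, hyy.2]
  · exact ⟨T, hTG, hTcard, S, hSsub.trans hR1sub, hScard,
      Or.inr ⟨hinj, fun y hy g hg => hR1const y (hSsub hy) g hg⟩⟩

/-- Pick `t` rows with small total pairwise agreement. -/
lemma pick_rows (t M nn : ℕ) (A B : Finset ℕ) (ψ : ℕ → ℕ → ℕ)
    (hA : A.card ≤ nn) (hB : nn ≤ 3*(B.card - t)) (htB : t ≤ B.card)
    (hcol : ∀ x ∈ A, ∀ c, (B.filter (fun y => ψ x y = c)).card ≤ M) :
    ∃ R, R ⊆ B ∧ R.card = t ∧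
      (∑ y ∈ R, ∑ y' ∈ R.erase y, (A.filter (fun x => ψ x y = ψ x y')).card)
        ≤ t*(t-1)*(3*M) := by
  classical
  set q : ℕ → ℕ → ℕ := fun y y' => (A.filter (fun x => ψ x y = ψ x y')).card with hq
  have qsymm : ∀ a b, q a b = q b a := by
    intro a b
    show (A.filter (fun x => ψ x a = ψ x b)).card = (A.filter (fun x => ψ x b = ψ x a)).card
    congr 1
    apply Finset.filter_congr
    intro x _
    constructor <;> exact Eq.symm
  suffices H : ∀ i, i ≤ t → ∃ R, R ⊆ B ∧ R.card = i ∧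
      (∑ y ∈ R, ∑ y' ∈ R.erase y, q y y') ≤ i*(i-1)*(3*M) by
    obtain ⟨R, h1, h2, h3⟩ := H t le_rfl
    exact ⟨R, h1, h2, h3⟩
  intro i
  induction i with
  | zero => exact fun _ => ⟨∅, by simp⟩
  | succ i ih =>
    intro hit
    obtain ⟨R, hRB, hRcard, hRbad⟩ := ih (by omega)
    set cand := B \ R with hcand
    have hcandcard : cand.card = B.card - i := by
      rw [hcand, Finset.card_sdiff_of_subset hRB, hRcard]
    have hcandne : cand.Nonempty := by
      rw [← Finset.card_pos, hcandcard]
      omega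
    set g : ℕ → ℕ := fun y => ∑ y' ∈ R, q y' y with hg
    have hsum : ∑ y ∈ cand, g y ≤ i * (A.card * M) := by
      rw [hg]
      simp only
      rw [Finset.sum_comm]
      calc ∑ y' ∈ R, ∑ y ∈ cand, q y' y ≤ ∑ y' ∈ R, A.card * M := by
            apply Finset.sum_le_sum
            intro y' hy'
            -- ∑_{y∈cand} |A.filter (ψ x y' = ψ x y)| = ∑_{x∈A}|cand.filter ...|
            have hdc := double_count cand A (fun y x => ψ x y' = ψ x y)
            rw [hq]
            simp only
            rw [hdc]
            calc ∑ x ∈ A, (cand.filter (fun y => ψ x y' = ψ x y)).card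
                ≤ ∑ x ∈ A, M := by
                  apply Finset.sum_le_sum
                  intro x hx
                  have hsub : cand.filter (fun y => ψ x y' = ψ x y)
                      ⊆ B.filter (fun y => ψ x y = ψ x y') := by
                    intro y hy
                    have := Finset.mem_filter.mp hy
                    exact Finset.mem_filter.mpr ⟨(Finset.sdiff_subset) this.1, this.2.symm⟩
                  exact le_trans (Finset.card_le_card hsub) (hcol x hx _)
            _ = A.card * M := by rw [Finset.sum_const, smul_eq_mul]
      _ = i * (A.card * M) := by rw [Finset.sum_const, smul_eq_mul, hRcard]
    obtain ⟨y, hycand, hyavg⟩ := exists_le_avg cand g hcandne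
    have hgy : g y ≤ i * (3*M) := by
      have h1 : cand.card * g y ≤ i * (A.card * M) := le_trans hyavg hsum
      have h2 : A.card * M ≤ (3 * cand.card) * M := by
        apply Nat.mul_le_mul_right
        calc A.card ≤ nn := hA
        _ ≤ 3*(B.card - t) := hB
        _ ≤ 3*cand.card := by rw [hcandcard]; omega
      have h3 : cand.card * g y ≤ cand.card * (i * (3*M)) := by
        calc cand.card * g y ≤ i * ((3*cand.card) * M) := le_trans h1 (Nat.mul_le_mul_left _ h2)
        _ = cand.card * (i * (3*M)) := by ring
      exact Nat.le_of_mul_le_mul_left h3 (Finset.card_pos.mpr hcandne)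
    have hyB : y ∈ B := (Finset.mem_sdiff.mp hycand).1
    have hyR : y ∉ R := (Finset.mem_sdiff.mp hycand).2
    refine ⟨insert y R, ?_, ?_, ?_⟩
    · intro z hz
      rcases Finset.mem_insert.mp hz with rfl | hz
      · exact hyB
      · exact hRB hz
    · rw [Finset.card_insert_of_notMem hyR, hRcard]
    · -- badness
      rw [Finset.sum_insert hyR]
      have e1 : (insert y R).erase y = R := Finset.erase_insert hyR
      rw [e1]
      have e2 : ∀ y0 ∈ R, ∑ y1 ∈ (insert y R).erase y0, q y0 y1
          = q y0 y + ∑ y1 ∈ R.erase y0, q y0 y1 := by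
        intro y0 hy0
        have hne : y ≠ y0 := fun h => hyR (h ▸ hy0)
        rw [Finset.erase_insert_of_ne hne]
        rw [Finset.sum_insert (fun h => hyR (Finset.mem_of_mem_erase h))]
      rw [Finset.sum_congr rfl e2]
      rw [Finset.sum_add_distrib]
      have e3 : ∑ y1 ∈ R, q y y1 = g y := by
        rw [hg]; simp only
        apply Finset.sum_congr rfl
        intro y1 _
        exact qsymm y y1
      have e4 : ∑ y0 ∈ R, q y0 y = g y := by rw [hg]
      rw [e3, e4]
      -- g y ≤ i*3M, badness R ≤ i(i-1)3M, total ≤ (i+1)*i*3M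
      have : g y + (g y + ∑ y0 ∈ R, ∑ y1 ∈ R.erase y0, q y0 y1) ≤ 2*(i*(3*M)) + i*(i-1)*(3*M) := by
        omega
      refine le_trans this ?_
      rcases Nat.eq_zero_or_pos i with rfl | hi
      · simp
      · obtain ⟨j, rfl⟩ : ∃ j, i = j + 1 := ⟨i-1, by omega⟩
        have hr1 : (j+1+1) - 1 = j + 1 := rfl
        have hr2 : (j+1) - 1 = j := rfl
        rw [hr1, hr2]
        exact le_of_eq (by ring)


/-- Greedy column selection producing a totally rainbow grid. -/
lemma pick_cols (t SP M1 : ℕ) (A X R : Finset ℕ) (ψ : ℕ → ℕ → ℕ)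
    (hAX : A ⊆ X) (hRt : R.card = t)
    (hrow : ∀ y ∈ R, ∀ c, (X.filter (fun x => ψ x y = c)).card ≤ M1)
    (hagree : (∑ y ∈ R, ∑ y' ∈ R.erase y, (A.filter (fun x => ψ x y = ψ x y')).card) ≤ SP)
    (hbig : t + SP + t*(t*(t*M1)) < A.card) :
    ∃ U₀, U₀ ⊆ A ∧ U₀.card = t ∧ ∀ x ∈ U₀, ∀ x' ∈ U₀, ∀ y ∈ R, ∀ y' ∈ R,
      ψ x y = ψ x' y' → x = x' ∧ y = y' := by
  classical
  set AgreeBad := R.biUnion (fun y => (R.erase y).biUnion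
      (fun y' => A.filter (fun x => ψ x y = ψ x y'))) with hAB
  have hABcard : AgreeBad.card ≤ SP := by
    rw [hAB]
    refine le_trans (Finset.card_biUnion_le) (le_trans ?_ hagree)
    apply Finset.sum_le_sum
    intro y _
    exact Finset.card_biUnion_le
  suffices H : ∀ i, i ≤ t → ∃ U₀, U₀ ⊆ A ∧ U₀.card = i ∧ ∀ x ∈ U₀, ∀ x' ∈ U₀, ∀ y ∈ R, ∀ y' ∈ R,
      ψ x y = ψ x' y' → x = x' ∧ y = y' by
    exact H t le_rfl
  intro i
  induction i with
  | zero => exact fun _ => ⟨∅, by simp⟩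
  | succ i ih =>
    intro hit
    obtain ⟨xs, hxsA, hxscard, hinv⟩ := ih (by omega)
    set CrossBad := xs.biUnion (fun x' => R.biUnion (fun y' => R.biUnion
        (fun y => X.filter (fun x => ψ x y = ψ x' y')))) with hCB
    have hCBcard : CrossBad.card ≤ i*(t*(t*M1)) := by
      rw [hCB]
      refine le_trans Finset.card_biUnion_le ?_
      calc ∑ x' ∈ xs, ((R.biUnion (fun y' => R.biUnion
              (fun y => X.filter (fun x => ψ x y = ψ x' y')))).card)
          ≤ ∑ x' ∈ xs, t*(t*M1) := by
            apply Finset.sum_le_sum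
            intro x' _
            refine le_trans Finset.card_biUnion_le ?_
            calc ∑ y' ∈ R, ((R.biUnion (fun y => X.filter (fun x => ψ x y = ψ x' y'))).card)
                ≤ ∑ y' ∈ R, (t*M1) := by
                  apply Finset.sum_le_sum
                  intro y' _
                  refine le_trans Finset.card_biUnion_le ?_
                  calc ∑ y ∈ R, (X.filter (fun x => ψ x y = ψ x' y')).card
                      ≤ ∑ y ∈ R, M1 := Finset.sum_le_sum (fun y hy => hrow y hy _)
                  _ = t * M1 := by rw [Finset.sum_const, smul_eq_mul, hRt]
            _ = t*(t*M1) := by rw [Finset.sum_const, smul_eq_mul, hRt]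
      _ = i*(t*(t*M1)) := by rw [Finset.sum_const, smul_eq_mul, hxscard]
    have hbad : (xs ∪ AgreeBad ∪ CrossBad).card < A.card := by
      calc (xs ∪ AgreeBad ∪ CrossBad).card
          ≤ xs.card + AgreeBad.card + CrossBad.card := by
            refine le_trans (Finset.card_union_le _ _) ?_
            exact Nat.add_le_add_right (Finset.card_union_le _ _) _
      _ ≤ i + SP + i*(t*(t*M1)) := by
            have := hABcard
            omega
      _ ≤ t + SP + t*(t*(t*M1)) := by
            have h1 : i ≤ t := by omega
            have h2 : i*(t*(t*M1)) ≤ t*(t*(t*M1)) := Nat.mul_le_mul_right _ h1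
            omega
      _ < A.card := hbig
    have hex : ∃ x ∈ A, x ∉ xs ∪ AgreeBad ∪ CrossBad := by
      by_contra hcon
      push_neg at hcon
      have hsub : A ⊆ xs ∪ AgreeBad ∪ CrossBad := hcon
      have := Finset.card_le_card hsub
      omega
    obtain ⟨x, hxA, hxBad⟩ := hex
    have hxxs : x ∉ xs := fun h => hxBad (Finset.mem_union.mpr
      (Or.inl (Finset.mem_union.mpr (Or.inl h))))
    have hxAgree : x ∉ AgreeBad := fun h => hxBad (Finset.mem_union.mpr
      (Or.inl (Finset.mem_union.mpr (Or.inr h))))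
    have hxCross : x ∉ CrossBad := fun h => hxBad (Finset.mem_union.mpr (Or.inr h))
    refine ⟨insert x xs, ?_, ?_, ?_⟩
    · intro z hz
      rcases Finset.mem_insert.mp hz with rfl | hz
      · exact hxA
      · exact hxsA hz
    · rw [Finset.card_insert_of_notMem hxxs, hxscard]
    · intro x0 hx0 x1 hx1 y hy y' hy' heq
      -- helper facts
      have hnewAgree : ∀ y0 ∈ R, ∀ y1 ∈ R, y0 ≠ y1 → ψ x y0 ≠ ψ x y1 := by
        intro y0 hy0 y1 hy1 hne hcontra
        apply hxAgree
        rw [hAB]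
        apply Finset.mem_biUnion.mpr
        exact ⟨y0, hy0, Finset.mem_biUnion.mpr ⟨y1, Finset.mem_erase.mpr ⟨hne.symm, hy1⟩,
          Finset.mem_filter.mpr ⟨hxA, hcontra⟩⟩⟩
      have hnewCross : ∀ x' ∈ xs, ∀ y0 ∈ R, ∀ y1 ∈ R, ψ x y0 ≠ ψ x' y1 := by
        intro x' hx' y0 hy0 y1 hy1 hcontra
        apply hxCross
        rw [hCB]
        apply Finset.mem_biUnion.mpr
        refine ⟨x', hx', Finset.mem_biUnion.mpr ⟨y1, hy1, Finset.mem_biUnion.mpr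
          ⟨y0, hy0, Finset.mem_filter.mpr ⟨hAX hxA, hcontra⟩⟩⟩⟩
      rcases Finset.mem_insert.mp hx0 with rfl | hx0old
      · rcases Finset.mem_insert.mp hx1 with rfl | hx1old
        · -- both new
          refine ⟨rfl, ?_⟩
          by_contra hne
          exact hnewAgree y hy y' hy' hne heq
        · exact absurd heq (hnewCross x1 hx1old y hy y' hy')
      · rcases Finset.mem_insert.mp hx1 with rfl | hx1old
        · exact absurd heq.symm (hnewCross x0 hx0old y' hy' y hy)
        · exact hinv x0 hx0old x1 hx1old y hy y' hy' heq


set_option maxHeartbeats 2000000 in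
/-- The main structural theorem: canonical grids in colourings of `X × Y`. -/
lemma main (t : ℕ) (ht : 2^60 ≤ t) (X Y : Finset ℕ)
    (hX : X.card = t^(3*(t+1))) (hY : Y.card = t^(3*(t+1))) (ψ : ℕ → ℕ → ℕ) :
    ∃ (U₀ U₁ : Finset ℕ) (J : Finset (Fin 2)),
      U₀ ⊆ X ∧ U₁ ⊆ Y ∧ U₀.card = t ∧ U₁.card = t ∧
      ∀ x ∈ U₀, ∀ y ∈ U₁, ∀ x' ∈ U₀, ∀ y' ∈ U₁,
        (ψ x y = ψ x' y' ↔ (((0:Fin 2) ∈ J → x = x') ∧ ((1:Fin 2) ∈ J → y = y'))) := by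
  classical
  -- basic numerics
  have ht2 : 2 ≤ t := le_trans (by norm_num) ht
  have ht0 : 0 < t := by omega
  set ℓ := Nat.log 2 t with hldef
  have hl60 : 60 ≤ ℓ := by
    rw [hldef]
    exact (Nat.le_log_iff_pow_le (by norm_num) (by omega)).mpr ht
  have hlt : 2^ℓ ≤ t := Nat.pow_log_le_self 2 (by omega)
  set L := ℓ/4 with hLdef
  have hL5 : 5 ≤ L := by omega
  have h2L7 : 2*(L+3)+1 ≤ ℓ := by omega
  have hcond2 : 2*3^(L+3) ≤ t := by
    have h1 : (3:ℕ)^(L+3) ≤ 4^(L+3) := Nat.pow_le_pow_left (by norm_num) _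
    have h2 : (4:ℕ)^(L+3) = 2^(2*(L+3)) := by
      rw [show (4:ℕ) = 2^2 by norm_num, ← pow_mul]
    have h3 : 2*(2:ℕ)^(2*(L+3)) = 2^(2*(L+3)+1) := by rw [pow_succ]; ring
    calc 2*3^(L+3) ≤ 2*4^(L+3) := by omega
    _ = 2^(2*(L+3)+1) := by rw [h2, h3]
    _ ≤ 2^ℓ := Nat.pow_le_pow_right (by norm_num) h2L7
    _ ≤ t := hlt
  have hcond1 : (L+3)*(L+1) ≤ t := by
    have h1 : (L+3)*(L+1) ≤ (L+3)*(L+3) := Nat.mul_le_mul_left _ (by omega)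
    have h2 : (L+3) ≤ 2^(L+3) := Nat.lt_two_pow_self.le
    have h3 : (L+3)*(L+3) ≤ 2^(L+3) * 2^(L+3) := Nat.mul_le_mul h2 h2
    have h4 : (2:ℕ)^(L+3) * 2^(L+3) = 2^(2*(L+3)) := by rw [← pow_add]; ring_nf
    calc (L+3)*(L+1) ≤ 2^(2*(L+3)) := by omega
    _ ≤ 2^ℓ := Nat.pow_le_pow_right (by norm_num) (by omega)
    _ ≤ t := hlt
  have hLt1 : L + 1 < t := by
    have : L+3 ≤ (L+3)*(L+1) := Nat.le_mul_of_pos_right _ (by omega)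
    omega
  -- parameters
  set nn := t^(3*t+3) with hnn
  have he33 : 3*(t+1) = 3*t+3 := by ring
  have hXn : X.card = nn := by rw [hX, he33]
  have hYn : Y.card = nn := by rw [hY, he33]
  set Mc := t^(3*t) with hMc
  set Mr := t^(3*t-1)*(t-L) with hMr
  set P := t^(3*t+2) with hP
  have hPt : P * t = nn := by rw [hP, hnn, ← pow_succ]
  have hPMc : P = Mc * t^2 := by rw [hP, hMc, ← pow_add]
  have hPMr : t^3 * Mr = P * (t - L) := by
    rw [hMr, hP, ← mul_assoc, ← pow_add]
    congr 2
    omega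
  have htnn : t ≤ nn := by
    rw [hnn]
    calc t = t^1 := (pow_one t).symm
    _ ≤ t^(3*t+3) := Nat.pow_le_pow_right (by omega) (by omega)
  have ht2nn : t^2 ≤ nn := by
    rw [hnn]; exact Nat.pow_le_pow_right (by omega) (by omega)
  have hMr1 : 1 ≤ Mr := by
    rw [hMr]
    have h1 : 0 < t^(3*t-1) := Nat.pow_pos ht0
    have h2 : 0 < t - L := by omega
    exact Nat.mul_pos h1 h2
  have hMc1 : 1 ≤ Mc := Nat.pow_pos ht0
  set Q := (t-1)*(t-1)+1 with hQdef
  -- classes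
  set rcls : ℕ → ℕ → Finset ℕ := fun y c => X.filter (fun x => ψ x y = c) with hrcls
  set ccls : ℕ → ℕ → Finset ℕ := fun x c => Y.filter (fun y => ψ x y = c) with hccls
  set HR := Y.filter (fun y => ∃ x ∈ X, Mr ≤ (rcls y (ψ x y)).card) with hHR
  set HC := X.filter (fun x => ∃ y ∈ Y, Mc ≤ (ccls x (ψ x y)).card) with hHC
  have hHRsub : HR ⊆ Y := Finset.filter_subset _ _
  have hHCsub : HC ⊆ X := Finset.filter_subset _ _
  have hlightR : ∀ y ∈ Y, y ∉ HR → ∀ c, (rcls y c).card ≤ Mr - 1 := by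
    intro y hyY hyHR c
    by_contra hcon
    push_neg at hcon
    have hMrle : Mr ≤ (rcls y c).card := by omega
    have hne : (rcls y c).Nonempty := by
      rw [← Finset.card_pos]; omega
    obtain ⟨x, hx⟩ := hne
    rw [hrcls] at hx
    simp only [Finset.mem_filter] at hx
    apply hyHR
    rw [hHR]
    apply Finset.mem_filter.mpr
    refine ⟨hyY, ⟨x, hx.1, ?_⟩⟩
    rw [hx.2]
    exact hMrle
  have hlightC : ∀ x ∈ X, x ∉ HC → ∀ c, (ccls x c).card ≤ Mc - 1 := by
    intro x hxX hxHC c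
    by_contra hcon
    push_neg at hcon
    have hMcle : Mc ≤ (ccls x c).card := by omega
    have hne : (ccls x c).Nonempty := by
      rw [← Finset.card_pos]; omega
    obtain ⟨y, hy⟩ := hne
    rw [hccls] at hy
    simp only [Finset.mem_filter] at hy
    apply hxHC
    rw [hHC]
    apply Finset.mem_filter.mpr
    refine ⟨hxX, ⟨y, hy.1, ?_⟩⟩
    rw [hy.2]
    exact hMcle
  by_cases hcaseI : nn ≤ 2 * HR.card
  · -- Case I : many heavy rows
    have hex : ∀ y ∈ HR, ∃ c, Mr ≤ (rcls y c).card := by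
      intro y hy
      rw [hHR] at hy
      obtain ⟨x, _, hx⟩ := (Finset.mem_filter.mp hy).2
      exact ⟨ψ x y, hx⟩
    set w : ℕ → ℕ := fun y => if h : ∃ c, Mr ≤ (rcls y c).card then h.choose else 0 with hw
    set Cr : ℕ → Finset ℕ := fun y => rcls y (w y) with hCr
    have hCrspec : ∀ y ∈ HR, Cr y ⊆ X ∧ Mr ≤ (Cr y).card := by
      intro y hy
      constructor
      · rw [hCr, hrcls]; exact Finset.filter_subset _ _
      · rw [hCr, hw]
        simp only [dif_pos (hex y hy)]
        exact (hex y hy).choose_spec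
    have hconst : ∀ y ∈ HR, ∀ g ∈ Cr y, ψ g y = w y := by
      intro y _ g hg
      rw [hCr, hrcls] at hg
      exact (Finset.mem_filter.mp hg).2
    have hnumI : Q * X.card.choose t ≤ HR.card * Mr.choose t := by
      have base := num_row t L hLt1 ht2 (pow_shave t L hcond1 hcond2)
      have base' : (2*Q) * nn^t ≤ nn * (Mr + 1 - t)^t := by
        rw [hQdef, hnn, hMr]
        calc 2*((t-1)*(t-1)+1) * (t^(3*t+3))^t ≤ t^(3*t+3) * (t^(3*t-1)*(t-L) + 1 - t)^t := base
        _ = t^(3*t+3) * (t^(3*t-1)*(t-L) + 1 - t)^t := rfl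
      have ci := choose_ineq t Mr nn (2*Q) nn base'
      have h2 : 2*(Q * X.card.choose t) ≤ 2*(HR.card * Mr.choose t) := by
        calc 2*(Q * X.card.choose t) = (2*Q) * nn.choose t := by rw [hXn]; ring
        _ ≤ nn * Mr.choose t := ci
        _ ≤ (2*HR.card) * Mr.choose t := Nat.mul_le_mul_right _ hcaseI
        _ = 2*(HR.card * Mr.choose t) := by ring
      omega
    obtain ⟨T, hTX, hTcard, S, hSHR, hScard, houtcome⟩ :=
      const_structure t Q X HR ψ Cr w Mr (by rw [hXn]; exact htnn) (le_refl Q)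
        hCrspec hconst hnumI
    have hSY : S ⊆ Y := hSHR.trans hHRsub
    rcases houtcome with ⟨c, hc⟩ | ⟨hinj, hval⟩
    · -- monochromatic
      refine ⟨T, S, ∅, hTX, hSY, hTcard, hScard, ?_⟩
      intro x hx y hy x' hx' y' hy'
      constructor
      · intro _
        exact ⟨fun h => absurd h (Finset.notMem_empty _),
               fun h => absurd h (Finset.notMem_empty _)⟩
      · intro _
        rw [hc y hy x hx, hc y' hy' x' hx']
    · -- row-injective
      refine ⟨T, S, {1}, hTX, hSY, hTcard, hScard, ?_⟩
      intro x hx y hy x' hx' y' hy'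
      constructor
      · intro heq
        refine ⟨fun h0 => absurd h0 (by decide), fun _ => ?_⟩
        apply hinj (Finset.mem_coe.mpr hy) (Finset.mem_coe.mpr hy')
        rw [← hval y hy x hx, ← hval y' hy' x' hx', heq]
      · rintro ⟨-, h1⟩
        have hyy : y = y' := h1 (Finset.mem_singleton_self 1)
        subst hyy
        rw [hval y hy x hx, hval y hy x' hx']
  · by_cases hcaseII : nn ≤ t * HC.card
    · -- Case II : many heavy columns
      have hex : ∀ x ∈ HC, ∃ c, Mc ≤ (ccls x c).card := by
        intro x hx
        rw [hHC] at hx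
        obtain ⟨y, _, hy⟩ := (Finset.mem_filter.mp hx).2
        exact ⟨ψ x y, hy⟩
      set w : ℕ → ℕ := fun x => if h : ∃ c, Mc ≤ (ccls x c).card then h.choose else 0 with hw
      set Cc : ℕ → Finset ℕ := fun x => ccls x (w x) with hCc
      have hCcspec : ∀ x ∈ HC, Cc x ⊆ Y ∧ Mc ≤ (Cc x).card := by
        intro x hx
        constructor
        · rw [hCc, hccls]; exact Finset.filter_subset _ _
        · rw [hCc, hw]
          simp only [dif_pos (hex x hx)]
          exact (hex x hx).choose_spec
      have hconst : ∀ x ∈ HC, ∀ g ∈ Cc x, ψ x g = w x := by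
        intro x _ g hg
        rw [hCc, hccls] at hg
        exact (Finset.mem_filter.mp hg).2
      have hnumII : Q * Y.card.choose t ≤ HC.card * Mc.choose t := by
        have base := num_col t ht2
        have base' : (Q*t) * nn^t ≤ nn * (Mc + 1 - t)^t := by
          rw [hQdef, hnn, hMc]
          exact base
        have ci := choose_ineq t Mc nn (Q*t) nn base'
        have h2 : t*(Q * Y.card.choose t) ≤ t*(HC.card * Mc.choose t) := by
          calc t*(Q * Y.card.choose t) = (Q*t) * nn.choose t := by rw [hYn]; ring
          _ ≤ nn * Mc.choose t := ci
          _ ≤ (t*HC.card) * Mc.choose t := Nat.mul_le_mul_right _ hcaseII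
          _ = t*(HC.card * Mc.choose t) := by ring
        exact Nat.le_of_mul_le_mul_left h2 ht0
      obtain ⟨T, hTY, hTcard, S, hSHC, hScard, houtcome⟩ :=
        const_structure t Q Y HC (fun g x => ψ x g) Cc w Mc (by rw [hYn]; exact htnn)
          (le_refl Q) hCcspec hconst hnumII
      have hSX : S ⊆ X := hSHC.trans hHCsub
      rcases houtcome with ⟨c, hc⟩ | ⟨hinj, hval⟩
      · refine ⟨S, T, ∅, hSX, hTY, hScard, hTcard, ?_⟩
        intro x hx y hy x' hx' y' hy'
        constructor
        · intro _
          exact ⟨fun h => absurd h (Finset.notMem_empty _),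
                 fun h => absurd h (Finset.notMem_empty _)⟩
        · intro _
          rw [hc x hx y hy, hc x' hx' y' hy']
      · refine ⟨S, T, {0}, hSX, hTY, hScard, hTcard, ?_⟩
        intro x hx y hy x' hx' y' hy'
        constructor
        · intro heq
          refine ⟨fun _ => ?_, fun h1 => absurd h1 (by decide)⟩
          apply hinj (Finset.mem_coe.mpr hx) (Finset.mem_coe.mpr hx')
          rw [← hval x hx y hy, ← hval x' hx' y' hy', heq]
        · rintro ⟨h0, -⟩
          have hxx : x = x' := h0 (Finset.mem_singleton_self 0)
          subst hxx
          rw [hval x hx y hy, hval x hx y' hy']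
    · -- Case III : both sides light
      push_neg at hcaseI hcaseII
      set A := X \ HC with hA
      set B := Y \ HR with hB
      have hAX : A ⊆ X := Finset.sdiff_subset
      have hBY : B ⊆ Y := Finset.sdiff_subset
      have hAcard : A.card = nn - HC.card := by rw [hA, Finset.card_sdiff_of_subset hHCsub, hXn]
      have hBcard : B.card = nn - HR.card := by rw [hB, Finset.card_sdiff_of_subset hHRsub, hYn]
      have hHRY : HR.card ≤ nn := by rw [← hYn]; exact Finset.card_le_card hHRsub
      have hHCX : HC.card ≤ nn := by rw [← hXn]; exact Finset.card_le_card hHCsub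
      have h6t : 6*t ≤ nn := by
        have h1 : 6*t ≤ t*t := Nat.mul_le_mul_right t (by omega)
        have h2 : t*t = t^2 := (sq t).symm
        omega
      have hBlight : ∀ y ∈ B, ∀ c, (rcls y c).card ≤ Mr - 1 := by
        intro y hy
        have := Finset.mem_sdiff.mp hy
        exact hlightR y this.1 this.2
      have hAlight : ∀ x ∈ A, ∀ c, (ccls x c).card ≤ Mc - 1 := by
        intro x hx
        have := Finset.mem_sdiff.mp hx
        exact hlightC x this.1 this.2
      -- pick rows
      obtain ⟨R, hRB, hRcard, hRagree⟩ := pick_rows t (Mc - 1) nn A B ψ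
        (by rw [hAcard]; omega)
        (by omega)
        (by omega)
        (by
          intro x hx c
          have hsub : B.filter (fun y => ψ x y = c) ⊆ ccls x c := by
            rw [hccls]
            exact Finset.filter_subset_filter _ hBY
          exact le_trans (Finset.card_le_card hsub) (hAlight x hx c))
      -- pick cols
      have hHCP : HC.card ≤ P - 1 := by
        have h1 : t * HC.card < P * t := by omega
        have h2 : HC.card < P := by
          by_contra hc
          push_neg at hc
          have : P * t ≤ HC.card * t := Nat.mul_le_mul_right t hc
          rw [mul_comm t HC.card] at h1
          omega
        omega
      have hSPb : t*(t-1)*(3*(Mc-1)) ≤ 3*P := by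
        calc t*(t-1)*(3*(Mc-1)) ≤ t*t*(3*Mc) := by
              apply Nat.mul_le_mul
              · exact Nat.mul_le_mul_left t (by omega)
              · omega
        _ = 3*(Mc*t^2) := by rw [sq]; ring
        _ = 3*P := by rw [← hPMc]
      have hCrossb : t*(t*(t*(Mr-1))) ≤ P*(t-L) := by
        calc t*(t*(t*(Mr-1))) ≤ t*(t*(t*Mr)) := by
              have : Mr - 1 ≤ Mr := by omega
              exact Nat.mul_le_mul_left _ (Nat.mul_le_mul_left _ (Nat.mul_le_mul_left _ this))
        _ = t^3 * Mr := by ring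
        _ = P*(t-L) := hPMr
      have hPL : P*(t-L) + P*L = P*t := by
        rw [← Nat.mul_add]
        congr 1
        omega
      have hPL5 : 5*P ≤ P*L := by
        rw [mul_comm 5 P]
        exact Nat.mul_le_mul_left P hL5
      have hPt1 : t+1 ≤ P := by
        have : t^2 ≤ P := by
          rw [hP]
          exact Nat.pow_le_pow_right (by omega) (by omega)
        have h1 : 2*t ≤ t*t := Nat.mul_le_mul_right t ht2
        have h2 : t*t = t^2 := (sq t).symm
        omega
      obtain ⟨U₀, hU₀A, hU₀card, hinv⟩ := pick_cols t (t*(t-1)*(3*(Mc-1))) (Mr-1) A X R ψ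
        hAX hRcard
        (by
          intro y hy c
          exact hBlight y (hRB hy) c)
        hRagree
        (by
          -- t + SP + t*(t*(t*(Mr-1))) < A.card
          have hAc : A.card ≥ P*t - (P-1) := by
            rw [hAcard, hPt]
            omega
          omega)
      refine ⟨U₀, R, Finset.univ, hU₀A.trans hAX, hRB.trans hBY, hU₀card, hRcard, ?_⟩
      intro x hx y hy x' hx' y' hy'
      constructor
      · intro heq
        have := hinv x hx x' hx' y hy y' hy' heq
        exact ⟨fun _ => this.1, fun _ => this.2⟩
      · rintro ⟨h0, h1⟩
        rw [h0 (Finset.mem_univ 0), h1 (Finset.mem_univ 1)]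


end CanonicalBipartite

/-- **Canonical Ramsey numbers for bipartite graphs.**
For all sufficiently large `t`, every colouring `φ` of the edges of the complete
bipartite graph with both vertex classes of size `n = t^(3(t+1))` yields a canonical
copy of `K_{t,t}`, i.e. classes `U i ⊆ V i` of size `t` and a set `J ⊆ [2]` such that
two edges of the copy get the same colour iff they agree on the coordinates in `J`.
Edges are encoded as transversal functions `e : Fin 2 → ℕ` with `e i ∈ V i`. -/
theorem canonical_ramsey_bipartite :
    ∃ t₀ : ℕ, ∀ t : ℕ, t₀ ≤ t →
      ∀ V : Fin 2 → Finset ℕ, (∀ i, (V i).card = t ^ (3 * (t + 1))) →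
        ∀ φ : (Fin 2 → ℕ) → ℕ,
          ∃ (U : Fin 2 → Finset ℕ) (J : Finset (Fin 2)),
            (∀ i, U i ⊆ V i) ∧ (∀ i, (U i).card = t) ∧
            ∀ e ∈ Fintype.piFinset U, ∀ e' ∈ Fintype.piFinset U,
              (φ e = φ e' ↔ ∀ j ∈ J, e j = e' j) := by
  classical
  refine ⟨2^60, fun t ht V hV φ => ?_⟩
  set pr : ℕ → ℕ → (Fin 2 → ℕ) := fun x y i => if i = 0 then x else y with hpr
  obtain ⟨U₀, U₁, J, hU₀, hU₁, hc₀, hc₁, hcanon⟩ :=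
    CanonicalBipartite.main t ht (V 0) (V 1) (hV 0) (hV 1) (fun x y => φ (pr x y))
  refine ⟨fun i => if i = 0 then U₀ else U₁, J, ?_, ?_, ?_⟩
  · intro i
    fin_cases i
    · simpa using hU₀
    · simpa using hU₁
  · intro i
    fin_cases i
    · simpa using hc₀
    · simpa using hc₁
  · intro e he e' he'
    rw [Fintype.mem_piFinset] at he he'
    have he0 : e 0 ∈ U₀ := by simpa using he 0
    have he1 : e 1 ∈ U₁ := by simpa using he 1
    have he0' : e' 0 ∈ U₀ := by simpa using he' 0
    have he1' : e' 1 ∈ U₁ := by simpa using he' 1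
    have hee : e = pr (e 0) (e 1) := by
      funext i
      fin_cases i <;> simp [hpr]
    have hee' : e' = pr (e' 0) (e' 1) := by
      funext i
      fin_cases i <;> simp [hpr]
    have key := hcanon (e 0) he0 (e 1) he1 (e' 0) he0' (e' 1) he1'
    constructor
    · intro heq
      have : (fun x y => φ (pr x y)) (e 0) (e 1) = (fun x y => φ (pr x y)) (e' 0) (e' 1) := by
        simp only
        rw [← hee, ← hee']
        exact heq
      have hk := key.mp this
      intro j hj
      fin_cases j
      · exact hk.1 hj
      · exact hk.2 hj
    · intro hj
      have : (fun x y => φ (pr x y)) (e 0) (e 1) = (fun x y => φ (pr x y)) (e' 0) (e' 1) :=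
        key.mpr ⟨fun h0 => hj 0 h0, fun h1 => hj 1 h1⟩
      simp only at this
      rw [← hee, ← hee'] at this
      exact this
end

section
/- Let k ≥ 2, let H = (V₁ ∪̇ … ∪̇ V_k, E) be a k-partite k-uniform hypergraph, let δ ∈ (0,1], and let 0 ≤ j ≤ k−2. If a colouring φ: E → ℕ is (δ²/(1+δ), j+1)-bounded, then φ is (δ, j)-bounded. -/
open Finset

/-- The set `V_J` of `J`-patterns: partial transversals picking one vertex of `V j`
for each `j ∈ J`, encoded as functions that are `0` outside `J`.  It has
cardinality `∏_{j ∈ J} |V j|`. -/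
def patterns {k : ℕ} (V : Fin k → Finset ℕ) (J : Finset (Fin k)) : Finset (Fin k → ℕ) :=
  Fintype.piFinset fun j => if j ∈ J then V j else {0}

/-- A colouring `φ` of the edge set `E` of a `k`-partite `k`-uniform hypergraph
(edges are transversals `e : Fin k → ℕ`, `e i ∈ V i`) is `(δ, J)`-bounded if all but
at most `δ ∏_{j∈J} |V j|` of the patterns `S ∈ V_J` satisfy, for every colour `ℓ`,
`|{e ∈ E : e_J = S, φ e = ℓ}| ≤ δ ∏_{j∉J} |V j|`. -/
def BoundedOn {k : ℕ} (V : Fin k → Finset ℕ) (E : Finset (Fin k → ℕ))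
    (φ : (Fin k → ℕ) → ℕ) (δ : ℝ) (J : Finset (Fin k)) : Prop :=
  ∃ B ⊆ patterns V J,
    (B.card : ℝ) ≤ δ * ∏ j ∈ J, ((V j).card : ℝ) ∧
    ∀ S ∈ patterns V J, S ∉ B → ∀ ℓ : ℕ,
      ((E.filter fun e => (∀ j ∈ J, e j = S j) ∧ φ e = ℓ).card : ℝ)
        ≤ δ * ∏ j ∈ Finset.univ \ J, ((V j).card : ℝ)

lemma mem_patterns {k : ℕ} {V : Fin k → Finset ℕ} {J : Finset (Fin k)} {S : Fin k → ℕ} :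
    S ∈ patterns V J ↔ ∀ j, S j ∈ (if j ∈ J then V j else ({0} : Finset ℕ)) := by
  simp [patterns, Fintype.mem_piFinset]

/-- **Boundedness steps down:** for a `k`-partite `k`-uniform hypergraph with `k ≥ 2`,
`δ ∈ (0,1]` and `0 ≤ j ≤ k-2`, every `(δ²/(1+δ), j+1)`-bounded colouring
is `(δ, j)`-bounded. -/
theorem bounded_step_down (k : ℕ) (hk : 2 ≤ k)
    (V : Fin k → Finset ℕ) (E : Finset (Fin k → ℕ)) (hE : E ⊆ Fintype.piFinset V)
    (φ : (Fin k → ℕ) → ℕ) (δ : ℝ) (hδ : δ ∈ Set.Ioc (0 : ℝ) 1)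
    (j : ℕ) (hj : j ≤ k - 2)
    (hbdd : ∀ J : Finset (Fin k), J.card = j + 1 →
      BoundedOn V E φ (δ ^ 2 / (1 + δ)) J) :
    ∀ J : Finset (Fin k), J.card = j → BoundedOn V E φ δ J := by
  classical
  obtain ⟨hδ0, hδ1⟩ := hδ
  have h1δ : (0:ℝ) < 1 + δ := by linarith
  intro J hJ
  -- pick a coordinate outside J
  obtain ⟨i, hi⟩ : ∃ i, i ∉ J := by
    by_contra h
    push_neg at h
    have hu := Finset.eq_univ_iff_forall.2 h
    rw [hu, Finset.card_univ, Fintype.card_fin] at hJ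
    omega
  set J' : Finset (Fin k) := insert i J with hJ'def
  have hiJ' : i ∈ J' := mem_insert_self i J
  have hJ'card : J'.card = j + 1 := by rw [card_insert_of_notMem hi, hJ]
  obtain ⟨B', hB'sub, hB'card, hB'good⟩ := hbdd J' hJ'card
  -- basic facts about patterns
  have hS0 : ∀ S ∈ patterns V J, S i = 0 := by
    intro S hS
    have h := mem_patterns.1 hS i
    simpa [hi] using h
  have hext : ∀ S ∈ patterns V J, ∀ v ∈ V i, Function.update S i v ∈ patterns V J' := by
    intro S hS v hv
    rw [mem_patterns]
    intro t
    rcases eq_or_ne t i with rfl | hti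
    · simpa [hiJ'] using hv
    · rw [Function.update_of_ne hti]
      have h := mem_patterns.1 hS t
      have hiff : t ∈ J' ↔ t ∈ J := by simp [hJ'def, hti]
      rw [if_congr hiff rfl rfl]
      exact h
  -- the total number of bad extensions is at most |B'|
  have hfibsum : ∑ S ∈ patterns V J,
      ((V i).filter fun v => Function.update S i v ∈ B').card ≤ B'.card := by
    have hmap : ∀ S' ∈ B', Function.update S' i 0 ∈ patterns V J := by
      intro S' hS'
      rw [mem_patterns]
      intro t
      rcases eq_or_ne t i with rfl | hti
      · simp [hi]
      · rw [Function.update_of_ne hti]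
        have h := mem_patterns.1 (hB'sub hS') t
        have hiff : t ∈ J' ↔ t ∈ J := by simp [hJ'def, hti]
        rw [if_congr hiff rfl rfl] at h
        exact h
    rw [Finset.card_eq_sum_card_fiberwise hmap]
    apply Finset.sum_le_sum
    intro S hS
    apply Finset.card_le_card_of_injOn (fun v => Function.update S i v)
    · intro v hv
      rw [mem_coe, mem_filter] at hv ⊢
      refine ⟨hv.2, ?_⟩
      beta_reduce
      rw [Function.update_idem]
      rw [show (0:ℕ) = S i from (hS0 S hS).symm, Function.update_eq_self]
    · intro v _ w _ h
      have h' := congrFun h i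
      simpa using h'
  -- the bad set
  set B : Finset (Fin k → ℕ) := (patterns V J).filter
      (fun S => δ/(1+δ) * ((V i).card:ℝ)
        < (((V i).filter fun v => Function.update S i v ∈ B').card : ℝ)) with hBdef
  refine ⟨B, filter_subset _ _, ?_, ?_⟩
  · -- cardinality bound for B
    rcases Nat.eq_zero_or_pos (V i).card with hVi | hVi
    · have hViempty : V i = ∅ := Finset.card_eq_zero.1 hVi
      have hBempty : B = ∅ := by
        rw [hBdef]
        apply Finset.filter_false_of_mem
        intro S _
        simp [hViempty]
      rw [hBempty]
      have h0 : (0:ℝ) ≤ δ * ∏ t ∈ J, ((V t).card : ℝ) :=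
        mul_nonneg hδ0.le (Finset.prod_nonneg fun t _ => Nat.cast_nonneg _)
      simpa using h0
    · have hViR : (0:ℝ) < ((V i).card : ℝ) := by exact_mod_cast hVi
      have key : (B.card : ℝ) * (δ/(1+δ) * ((V i).card:ℝ)) ≤ (B'.card : ℝ) := by
        calc (B.card : ℝ) * (δ/(1+δ) * ((V i).card:ℝ))
            ≤ ∑ S ∈ B, (((V i).filter fun v => Function.update S i v ∈ B').card : ℝ) := by
              rw [← nsmul_eq_mul]
              refine Finset.card_nsmul_le_sum B _ _ ?_
              intro S hS
              exact le_of_lt (mem_filter.1 hS).2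
          _ ≤ ∑ S ∈ patterns V J,
                (((V i).filter fun v => Function.update S i v ∈ B').card : ℝ) :=
              Finset.sum_le_sum_of_subset_of_nonneg (filter_subset _ _)
                (by intro x _ _; positivity)
          _ ≤ (B'.card : ℝ) := by exact_mod_cast hfibsum
      have hprod : ∏ t ∈ J', ((V t).card : ℝ)
          = ((V i).card:ℝ) * ∏ t ∈ J, ((V t).card : ℝ) := Finset.prod_insert hi
      rw [hprod] at hB'card
      have hpos : (0:ℝ) < δ/(1+δ) * ((V i).card:ℝ) := by positivity
      rw [← mul_le_mul_iff_of_pos_right hpos]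
      calc (B.card : ℝ) * (δ/(1+δ) * ((V i).card:ℝ))
          ≤ (B'.card : ℝ) := key
        _ ≤ δ^2/(1+δ) * (((V i).card:ℝ) * ∏ t ∈ J, ((V t).card : ℝ)) := hB'card
        _ = δ * (∏ t ∈ J, ((V t).card : ℝ)) * (δ/(1+δ) * ((V i).card:ℝ)) := by ring
  · -- goodness of patterns outside B
    intro S hS hSB ℓ
    have hbadle : (((V i).filter fun v => Function.update S i v ∈ B').card : ℝ)
        ≤ δ/(1+δ) * ((V i).card:ℝ) := by
      have h : ¬ (δ/(1+δ) * ((V i).card:ℝ)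
          < (((V i).filter fun v => Function.update S i v ∈ B').card : ℝ)) := by
        intro h
        exact hSB (mem_filter.2 ⟨hS, h⟩)
      exact not_lt.1 h
    set T : Finset (Fin k → ℕ) := E.filter fun e => (∀ t ∈ J, e t = S t) ∧ φ e = ℓ with hTdef
    have hTcard : T.card = ∑ v ∈ V i, (T.filter fun e => e i = v).card := by
      apply Finset.card_eq_sum_card_fiberwise
      intro e he
      have heE := (mem_filter.1 he).1
      exact (Fintype.mem_piFinset.1 (hE heE)) i
    -- identification of fibers with J'-filters
    have heq : ∀ v : ℕ, T.filter (fun e => e i = v)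
        = E.filter fun e => (∀ t ∈ J', e t = Function.update S i v t) ∧ φ e = ℓ := by
      intro v
      rw [hTdef, filter_filter]
      apply Finset.filter_congr
      intro e _
      constructor
      · rintro ⟨⟨h1, h2⟩, h3⟩
        refine ⟨?_, h2⟩
        intro t ht
        rcases Finset.mem_insert.1 ht with rfl | htJ
        · rw [Function.update_self]; exact h3
        · rw [Function.update_of_ne (ne_of_mem_of_not_mem htJ hi)]; exact h1 t htJ
      · rintro ⟨h1, h2⟩
        refine ⟨⟨?_, h2⟩, ?_⟩
        · intro t ht
          have h := h1 t (Finset.mem_insert_of_mem ht)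
          rwa [Function.update_of_ne (ne_of_mem_of_not_mem ht hi)] at h
        · have h := h1 i hiJ'
          rwa [Function.update_self] at h
    set Q : ℝ := ∏ t ∈ Finset.univ \ J', ((V t).card : ℝ) with hQdef
    have hQ0 : (0:ℝ) ≤ Q := Finset.prod_nonneg fun t _ => by positivity
    -- trivial bound for each fiber
    have htriv : ∀ v ∈ V i, ((T.filter fun e => e i = v).card : ℝ) ≤ Q := by
      intro v hv
      have hsub : T.filter (fun e => e i = v)
          ⊆ Fintype.piFinset (fun t => if t ∈ J' then ({Function.update S i v t} : Finset ℕ)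
              else V t) := by
        intro e he
        rw [heq v, mem_filter] at he
        obtain ⟨heE, hcond, _⟩ := he
        rw [Fintype.mem_piFinset]
        intro t
        by_cases ht : t ∈ J'
        · simp only [ht, if_true, Finset.mem_singleton]
          exact hcond t ht
        · simp only [ht, if_false]
          exact (Fintype.mem_piFinset.1 (hE heE)) t
      have hcard := Finset.card_le_card hsub
      have hpi : (Fintype.piFinset (fun t => if t ∈ J'
          then ({Function.update S i v t} : Finset ℕ) else V t)).card
          = ∏ t ∈ Finset.univ \ J', (V t).card := by
        rw [Fintype.card_piFinset]
        rw [← Finset.prod_sdiff (Finset.subset_univ J')]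
        have h1 : ∏ t ∈ J', (if t ∈ J' then ({Function.update S i v t} : Finset ℕ)
            else V t).card = 1 := by
          apply Finset.prod_eq_one
          intro t ht
          simp [ht]
        have h2 : ∏ t ∈ Finset.univ \ J', (if t ∈ J'
            then ({Function.update S i v t} : Finset ℕ) else V t).card
            = ∏ t ∈ Finset.univ \ J', (V t).card := by
          apply Finset.prod_congr rfl
          intro t ht
          simp [(Finset.mem_sdiff.1 ht).2]
        rw [h1, h2, mul_one]
      rw [hpi] at hcard
      calc ((T.filter fun e => e i = v).card : ℝ)
          ≤ ((∏ t ∈ Finset.univ \ J', (V t).card : ℕ) : ℝ) := by exact_mod_cast hcard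
        _ = Q := by rw [hQdef]; push_cast; rfl
    -- good bound for fibers with good extension
    have hgoodv : ∀ v ∈ V i, Function.update S i v ∉ B' →
        ((T.filter fun e => e i = v).card : ℝ) ≤ δ^2/(1+δ) * Q := by
      intro v hv hvB'
      rw [heq v]
      exact hB'good (Function.update S i v) (hext S hS v hv) hvB' ℓ
    -- put the pieces together
    have hsplit : (T.card : ℝ)
        = ∑ v ∈ (V i).filter (fun v => Function.update S i v ∈ B'),
            ((T.filter fun e => e i = v).card : ℝ)
        + ∑ v ∈ (V i).filter (fun v => ¬ Function.update S i v ∈ B'),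
            ((T.filter fun e => e i = v).card : ℝ) := by
      rw [Finset.sum_filter_add_sum_filter_not]
      exact_mod_cast hTcard
    have hbadsum : ∑ v ∈ (V i).filter (fun v => Function.update S i v ∈ B'),
        ((T.filter fun e => e i = v).card : ℝ) ≤ δ/(1+δ) * ((V i).card:ℝ) * Q := by
      calc ∑ v ∈ (V i).filter (fun v => Function.update S i v ∈ B'),
            ((T.filter fun e => e i = v).card : ℝ)
          ≤ ∑ v ∈ (V i).filter (fun v => Function.update S i v ∈ B'), Q := by
            apply Finset.sum_le_sum
            intro v hv
            exact htriv v (Finset.mem_filter.1 hv).1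
        _ = (((V i).filter (fun v => Function.update S i v ∈ B')).card : ℝ) * Q := by
            rw [Finset.sum_const, nsmul_eq_mul]
        _ ≤ δ/(1+δ) * ((V i).card:ℝ) * Q := by
            apply mul_le_mul_of_nonneg_right hbadle hQ0
    have hgoodsum : ∑ v ∈ (V i).filter (fun v => ¬ Function.update S i v ∈ B'),
        ((T.filter fun e => e i = v).card : ℝ) ≤ ((V i).card:ℝ) * (δ^2/(1+δ) * Q) := by
      calc ∑ v ∈ (V i).filter (fun v => ¬ Function.update S i v ∈ B'),
            ((T.filter fun e => e i = v).card : ℝ)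
          ≤ ∑ v ∈ (V i).filter (fun v => ¬ Function.update S i v ∈ B'), δ^2/(1+δ) * Q := by
            apply Finset.sum_le_sum
            intro v hv
            have hv' := Finset.mem_filter.1 hv
            exact hgoodv v hv'.1 hv'.2
        _ = (((V i).filter (fun v => ¬ Function.update S i v ∈ B')).card : ℝ)
              * (δ^2/(1+δ) * Q) := by rw [Finset.sum_const, nsmul_eq_mul]
        _ ≤ ((V i).card:ℝ) * (δ^2/(1+δ) * Q) := by
            apply mul_le_mul_of_nonneg_right
            · exact Nat.cast_le.2 (Finset.card_filter_le _ _)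
            · exact mul_nonneg (div_nonneg (sq_nonneg δ) h1δ.le) hQ0
    have hprodout : ∏ t ∈ Finset.univ \ J, ((V t).card : ℝ) = ((V i).card:ℝ) * Q := by
      have hiu : i ∈ Finset.univ \ J := Finset.mem_sdiff.2 ⟨Finset.mem_univ i, hi⟩
      rw [← Finset.mul_prod_erase _ _ hiu, hQdef, hJ'def, Finset.sdiff_insert]
    rw [hprodout]
    have hfinal : δ/(1+δ) * ((V i).card:ℝ) * Q + ((V i).card:ℝ) * (δ^2/(1+δ) * Q)
        = δ * (((V i).card:ℝ) * Q) := by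
      field_simp
    calc (T.card : ℝ)
        = _ + _ := hsplit
      _ ≤ δ/(1+δ) * ((V i).card:ℝ) * Q + ((V i).card:ℝ) * (δ^2/(1+δ) * Q) :=
          add_le_add hbadsum hgoodsum
      _ = δ * (((V i).card:ℝ) * Q) := hfinal
end

section
/- Let k ≥ 1, let δ ∈ (0,1], and let t, n be positive integers with (δ/4^{k−1})^{t^{k−1}} · n ≥ 2t. If φ: E(K^{(k)}_{n,…,n}) → ℕ is a colouring of the complete k-partite k-uniform hypergraph with all classes of size n in which some colour appears on at least δ·n^k edges, then there is a monochromatic copy of K^{(k)}_{t,…,t}, i.e., sets U_i ⊆ V_i with |U_i| = t for every i ∈ [k] such that φ is constant on the edges spanned by U₁,…,U_k. -/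
open Finset

lemma aux_mono (k : ℕ) (hk : 1 ≤ k) :
    ∀ (δ : ℝ), 0 < δ → δ ≤ 1 → ∀ (t n : ℕ), 1 ≤ t → 1 ≤ n →
    (δ / 4 ^ (k - 1)) ^ (t ^ (k - 1)) * (n : ℝ) ≥ 2 * (t : ℝ) →
    ∀ (V : Fin k → Finset ℕ), (∀ i, (V i).card = n) →
    ∀ (φ : (Fin k → ℕ) → ℕ) (c : ℕ),
    δ * (n : ℝ) ^ k ≤ (((Fintype.piFinset V).filter fun e => φ e = c).card : ℝ) →
    ∃ U : Fin k → Finset ℕ, (∀ i, U i ⊆ V i) ∧ (∀ i, (U i).card = t) ∧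
      ∀ e ∈ Fintype.piFinset U, φ e = c := by
  induction k, hk using Nat.le_induction with
  | base =>
    intro δ hδ0 hδ1 t n ht hn hcond V hV φ c hc
    simp only [Nat.sub_self, pow_zero, pow_one, div_one] at hcond
    have h1 : ∀ e : Fin 1 → ℕ, e = fun _ => e 0 := fun e =>
      funext fun i => by rw [Subsingleton.elim i 0]
    set Sc := (Fintype.piFinset V).filter fun e => φ e = c with hSc
    set W := (V 0).filter (fun v => φ (fun _ => v) = c) with hW
    have hcard : Sc.card ≤ W.card := by
      apply Finset.card_le_card_of_injOn (fun e => e 0)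
      · intro e he
        simp only [hSc, Finset.mem_coe, Finset.mem_filter] at he
        simp only [hW, Finset.mem_coe, Finset.mem_filter]
        exact ⟨Fintype.mem_piFinset.1 he.1 0, by rw [← h1 e]; exact he.2⟩
      · intro e _ e' _ h0
        have h0' : e 0 = e' 0 := h0
        rw [h1 e, h1 e', h0']
    have htW : t ≤ W.card := by
      have h2 : (t : ℝ) ≤ (Sc.card : ℝ) := by
        have : (t : ℝ) ≤ 2 * t := by
          have : (0:ℝ) ≤ t := Nat.cast_nonneg t
          linarith
        calc (t:ℝ) ≤ 2 * t := this
          _ ≤ δ * n := hcond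
          _ ≤ (Sc.card : ℝ) := by rw [hSc]; rw [← pow_one (n:ℝ)] at *; simpa using hc
      have := h2.trans (Nat.cast_le.2 hcard)
      exact_mod_cast this
    obtain ⟨U0, hU0sub, hU0card⟩ := Finset.exists_subset_card_eq htW
    refine ⟨fun _ => U0, fun i => ?_, fun _ => hU0card, fun e he => ?_⟩
    · have : i = 0 := Subsingleton.elim i 0
      subst this
      exact hU0sub.trans (Finset.filter_subset _ _)
    · have h0 : e 0 ∈ U0 := Fintype.mem_piFinset.1 he 0
      have := Finset.mem_filter.1 (hU0sub h0)
      rw [h1 e]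
      exact this.2
  | succ k hk IH =>
    intro δ hδ0 hδ1 t n ht hn hcond V hV φ c hc
    obtain ⟨t', rfl⟩ : ∃ t', t = t' + 1 := ⟨t - 1, (Nat.succ_pred_eq_of_pos ht).symm⟩
    simp only [Nat.add_sub_cancel] at hcond
    -- notation
    set t := t' + 1 with hht
    set Vl := V (Fin.last k) with hVl
    set V' : Fin k → Finset ℕ := fun i => V i.castSucc with hV'def
    set P := Fintype.piFinset V' with hPdef
    set Nb : (Fin k → ℕ) → Finset ℕ :=
      fun e' => Vl.filter fun v => φ (Fin.snoc e' v) = c with hNb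
    have hV' : ∀ i, (V' i).card = n := fun i => hV _
    have hP : P.card = n ^ k := by
      rw [hPdef, Fintype.card_piFinset]
      simp [hV', Finset.prod_const, Finset.card_univ]
    -- basic numeric facts
    have hn0 : (0:ℝ) < n := by exact_mod_cast hn
    have ht0 : (0:ℝ) < t := by positivity
    have hδn : 2 * (t:ℝ) ≤ δ * n := by
      have hx0 : (0:ℝ) < δ / 4 ^ k := by positivity
      have hx1 : δ / 4 ^ k ≤ δ := by
        apply div_le_self hδ0.le
        exact one_le_pow₀ (by norm_num)
      have hxle : (δ / 4 ^ k) ^ (t ^ k) ≤ δ / 4 ^ k := by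
        apply pow_le_of_le_one hx0.le (hx1.trans hδ1)
        positivity
      calc 2 * (t:ℝ) ≤ (δ / 4 ^ k) ^ (t ^ k) * n := hcond
        _ ≤ (δ / 4 ^ k) * n := by
            exact mul_le_mul_of_nonneg_right hxle hn0.le
        _ ≤ δ * n := mul_le_mul_of_nonneg_right hx1 hn0.le
    -- step 1 : fiberwise count
    have hsum : (((Fintype.piFinset V).filter fun e => φ e = c).card : ℕ)
        = ∑ e' ∈ P, (Nb e').card := by
      rw [Finset.card_eq_sum_card_fiberwise (f := fun e => Fin.init e) (t := P)
        (fun e he => Fintype.mem_piFinset.2 fun i => by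
          have := Fintype.mem_piFinset.1 (Finset.mem_filter.1 he).1 i.castSucc
          simpa [Fin.init] using this)]
      refine Finset.sum_congr rfl fun e' he' => ?_
      apply Finset.card_bij (fun e _ => e (Fin.last k))
      · intro e he
        simp only [Finset.mem_filter] at he
        obtain ⟨⟨he1, he2⟩, he3⟩ := he
        rw [hNb, Finset.mem_filter]
        refine ⟨Fintype.mem_piFinset.1 he1 (Fin.last k), ?_⟩
        rw [← he3, Fin.snoc_init_self]
        exact he2
      · intro e he e2 he2 hee
        simp only [Finset.mem_filter] at he he2
        calc e = Fin.snoc (Fin.init e) (e (Fin.last k)) := (Fin.snoc_init_self e).symm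
          _ = Fin.snoc (Fin.init e2) (e2 (Fin.last k)) := by rw [he.2, he2.2, hee]
          _ = e2 := Fin.snoc_init_self e2
      · intro v hv
        rw [hNb, Finset.mem_filter] at hv
        refine ⟨Fin.snoc e' v, ?_, Fin.snoc_last _ _⟩
        simp only [Finset.mem_filter]
        refine ⟨⟨Fintype.mem_piFinset.2 fun i => ?_, hv.2⟩, Fin.init_snoc _ _⟩
        refine Fin.lastCases ?_ (fun j => ?_) i
        · simpa [Fin.snoc_last] using hv.1
        · simpa [Fin.snoc_castSucc] using Fintype.mem_piFinset.1 he' j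
    -- real-valued degree sum bound
    have hD : δ * (n:ℝ) ^ (k+1) ≤ ∑ e' ∈ P, ((Nb e').card : ℝ) := by
      calc δ * (n:ℝ) ^ (k+1) ≤ _ := hc
        _ = ∑ e' ∈ P, ((Nb e').card : ℝ) := by rw [hsum]; push_cast; ring
    -- g and its sum
    set g : (Fin k → ℕ) → ℝ := fun e' => max (((Nb e').card : ℝ) - t) 0 with hg
    have hg0 : ∀ e' ∈ P, 0 ≤ g e' := fun e' _ => le_max_right _ _
    have hgsum : (δ * n / 2) * (n:ℝ) ^ k ≤ ∑ e' ∈ P, g e' := by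
      have h1 : ∑ e' ∈ P, (((Nb e').card : ℝ) - t) ≤ ∑ e' ∈ P, g e' :=
        Finset.sum_le_sum fun i _ => le_max_left _ _
      have h2 : ∑ e' ∈ P, (((Nb e').card : ℝ) - t)
          = (∑ e' ∈ P, ((Nb e').card : ℝ)) - (n:ℝ)^k * t := by
        rw [Finset.sum_sub_distrib, Finset.sum_const, nsmul_eq_mul, hP]
        push_cast; ring
      have hnk : (0:ℝ) ≤ (n:ℝ) ^ k := by positivity
      have hps : (n:ℝ) ^ (k+1) = (n:ℝ) ^ k * n := pow_succ _ _
      nlinarith [hD, hδn]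
    -- power mean
    have hgt : (δ * n / 2) ^ t * (n:ℝ) ^ k ≤ ∑ e' ∈ P, g e' ^ t := by
      have key := pow_sum_div_card_le_sum_pow (s := P) (f := g) hg0 t'
      have hcast : ((P.card : ℕ) : ℝ) = (n:ℝ) ^ k := by rw [hP]; push_cast; ring
      rw [hcast] at key
      refine le_trans ?_ key
      have hnk : (0:ℝ) < (n:ℝ) ^ k := by positivity
      have hb0 : (0:ℝ) ≤ (δ * n / 2) * (n:ℝ) ^ k := by positivity
      rw [le_div_iff₀ (by positivity : (0:ℝ) < ((n:ℝ)^k) ^ t')]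
      calc (δ * n / 2) ^ t * (n:ℝ) ^ k * ((n:ℝ)^k) ^ t'
          = ((δ * n / 2) * (n:ℝ) ^ k) ^ t := by rw [hht]; ring
        _ ≤ (∑ e' ∈ P, g e') ^ t := pow_le_pow_left₀ hb0 hgsum t
    -- per-edge bound by binomial coefficients
    have hedge : ∀ e' ∈ P, g e' ^ t ≤ ((Nb e').card.choose t : ℝ) * (t.factorial : ℝ) := by
      intro e' _
      set d := (Nb e').card with hd
      have h1 : g e' ≤ ((d - t : ℕ) : ℝ) := by
        apply max_le _ (Nat.cast_nonneg _)
        rcases le_total t d with hle | hle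
        · rw [Nat.cast_sub hle]
        · have h2 : ((d - t : ℕ) : ℝ) = 0 := by rw [Nat.sub_eq_zero_of_le hle]; norm_num
          have h3 : (d:ℝ) ≤ t := Nat.cast_le.2 hle
          linarith
      have h2 : (d - t) ^ t ≤ d.descFactorial t := by
        rw [Nat.descFactorial_eq_prod_range]
        calc (d - t) ^ t = ∏ _i ∈ Finset.range t, (d - t) := by
              rw [Finset.prod_const, Finset.card_range]
          _ ≤ ∏ i ∈ Finset.range t, (d - i) := by
              apply Finset.prod_le_prod'
              intro i hi
              exact Nat.sub_le_sub_left (le_of_lt (Finset.mem_range.1 hi)) d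
      calc g e' ^ t ≤ (((d - t : ℕ) : ℝ)) ^ t :=
            pow_le_pow_left₀ (hg0 e' (by assumption)) h1 t
        _ = (((d - t) ^ t : ℕ) : ℝ) := by push_cast; ring
        _ ≤ ((d.descFactorial t : ℕ) : ℝ) := by exact_mod_cast h2
        _ = (d.choose t : ℝ) * (t.factorial : ℝ) := by
            rw [Nat.descFactorial_eq_factorial_mul_choose]; push_cast; ring
    have hchoose : (δ * n / 2) ^ t * (n:ℝ) ^ k
        ≤ (∑ e' ∈ P, ((Nb e').card.choose t : ℝ)) * (t.factorial : ℝ) := by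
      rw [Finset.sum_mul]
      exact le_trans hgt (Finset.sum_le_sum hedge)
    -- double counting over t-subsets
    set 𝒮 := Vl.powersetCard t with h𝒮
    have hdc : ∑ e' ∈ P, (Nb e').card.choose t
        = ∑ S ∈ 𝒮, (P.filter fun e' => S ⊆ Nb e').card := by
      have h1 : ∀ e', (Nb e').card.choose t = (𝒮.filter fun S => S ⊆ Nb e').card := by
        intro e'
        rw [← Finset.card_powersetCard]
        congr 1
        ext S
        simp only [Finset.mem_powersetCard, Finset.mem_filter, h𝒮]
        constructor
        · exact fun h => ⟨⟨h.1.trans (Finset.filter_subset _ _), h.2⟩, h.1⟩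
        · exact fun h => ⟨h.2, h.1.2⟩
      simp only [h1, Finset.card_filter]
      exact Finset.sum_comm
    have htn : t ≤ n := by
      have h1 : (t:ℝ) ≤ (n:ℝ) := by nlinarith [hδn]
      exact_mod_cast h1
    have h𝒮ne : 𝒮.Nonempty := Finset.powersetCard_nonempty.2 (by rw [hVl, hV]; exact htn)
    have h𝒮card : 𝒮.card = n.choose t := by rw [h𝒮, Finset.card_powersetCard, hVl, hV]
    have hfac0 : (0:ℝ) < (t.factorial : ℝ) := by exact_mod_cast t.factorial_pos
    -- averaging
    obtain ⟨S, hS𝒮, hSbig⟩ : ∃ S ∈ 𝒮,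
        (δ / 2) ^ t * (n:ℝ) ^ k ≤ ((P.filter fun e' => S ⊆ Nb e').card : ℝ) := by
      by_contra hcon
      push_neg at hcon
      have hstrict : ∑ S ∈ 𝒮, ((P.filter fun e' => S ⊆ Nb e').card : ℝ)
          < (𝒮.card : ℝ) * ((δ / 2) ^ t * (n:ℝ) ^ k) := by
        calc ∑ S ∈ 𝒮, ((P.filter fun e' => S ⊆ Nb e').card : ℝ)
            < ∑ _S ∈ 𝒮, ((δ / 2) ^ t * (n:ℝ) ^ k) :=
              Finset.sum_lt_sum_of_nonempty h𝒮ne fun S hS => hcon S hS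
          _ = (𝒮.card : ℝ) * ((δ / 2) ^ t * (n:ℝ) ^ k) := by
              rw [Finset.sum_const, nsmul_eq_mul]
      have hA : (δ * n / 2) ^ t * (n:ℝ) ^ k
          ≤ (∑ S ∈ 𝒮, ((P.filter fun e' => S ⊆ Nb e').card : ℝ)) * (t.factorial : ℝ) := by
        refine le_trans hchoose ?_
        apply mul_le_mul_of_nonneg_right _ hfac0.le
        apply le_of_eq
        exact_mod_cast congrArg (fun x : ℕ => (x:ℝ)) hdc
      have hnd : (n.choose t : ℝ) * (t.factorial : ℝ) ≤ (n:ℝ) ^ t := by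
        have h1 := Nat.descFactorial_le_pow n t
        have h2 := Nat.descFactorial_eq_factorial_mul_choose n t
        calc (n.choose t : ℝ) * (t.factorial : ℝ)
            = ((t.factorial * n.choose t : ℕ) : ℝ) := by push_cast; ring
          _ = ((n.descFactorial t : ℕ) : ℝ) := by rw [← h2]
          _ ≤ (n:ℝ) ^ t := by exact_mod_cast h1
      have hB : (𝒮.card : ℝ) * ((δ / 2) ^ t * (n:ℝ) ^ k) * (t.factorial : ℝ)
          ≤ (δ * n / 2) ^ t * (n:ℝ) ^ k := by
        have hrw : (𝒮.card : ℝ) = (n.choose t : ℝ) := by rw [h𝒮card]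
        rw [hrw]
        have hlhs : (n.choose t : ℝ) * ((δ / 2) ^ t * (n:ℝ) ^ k) * (t.factorial : ℝ)
            = ((n.choose t : ℝ) * (t.factorial : ℝ)) * ((δ / 2) ^ t * (n:ℝ) ^ k) := by ring
        rw [hlhs]
        calc ((n.choose t : ℝ) * (t.factorial : ℝ)) * ((δ / 2) ^ t * (n:ℝ) ^ k)
            ≤ (n:ℝ) ^ t * ((δ / 2) ^ t * (n:ℝ) ^ k) := by
              apply mul_le_mul_of_nonneg_right hnd (by positivity)
          _ = (δ * n / 2) ^ t * (n:ℝ) ^ k := by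
              rw [show δ * n / 2 = (δ / 2) * (n:ℝ) by ring, mul_pow]; ring
      have hfinal := (hA.trans_lt (mul_lt_mul_of_pos_right hstrict hfac0)).trans_le hB
      exact lt_irrefl _ hfinal
    obtain ⟨hSsub, hScard⟩ := Finset.mem_powersetCard.1 hS𝒮
    -- the reduced colouring
    set φ' : (Fin k → ℕ) → ℕ := fun e' => if S ⊆ Nb e' then 0 else 1 with hφ'
    have hfilter : (P.filter fun e' => φ' e' = 0) = P.filter fun e' => S ⊆ Nb e' := by
      apply Finset.filter_congr
      intro e' _
      simp [hφ']
    -- arithmetic for IH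
    have hδ'0 : (0:ℝ) < (δ / 2) ^ t := by positivity
    have hδ'1 : (δ / 2) ^ t ≤ 1 := pow_le_one₀ (by positivity) (by linarith)
    have hcond' : ((δ / 2) ^ t / 4 ^ (k - 1)) ^ (t ^ (k - 1)) * (n:ℝ) ≥ 2 * (t:ℝ) := by
      obtain ⟨m, rfl⟩ : ∃ m, k = m + 1 := ⟨k - 1, (Nat.succ_pred_eq_of_pos hk).symm⟩
      simp only [Nat.add_sub_cancel]
      have hbase : (δ / 4 ^ (m+1)) ^ t ≤ (δ / 2) ^ t / 4 ^ m := by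
        rw [div_pow, div_pow, div_div]
        apply div_le_div_of_nonneg_left (by positivity) (by positivity)
        calc (2:ℝ) ^ t * 4 ^ m ≤ 4 ^ t * 4 ^ (m * t) := by
              apply mul_le_mul
              · exact pow_le_pow_left₀ (by norm_num) (by norm_num) t
              · apply pow_le_pow_right₀ (by norm_num)
                exact Nat.le_mul_of_pos_right m (by omega)
              · positivity
              · positivity
          _ = ((4:ℝ) ^ (m+1)) ^ t := by
              rw [← pow_add, ← pow_mul]
              congr 1
              ring
      have hmono : (δ / 4 ^ (m+1)) ^ (t ^ (m+1)) ≤ ((δ / 2) ^ t / 4 ^ m) ^ (t ^ m) := by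
        have h1 : (δ / 4 ^ (m+1)) ^ (t ^ (m+1)) = ((δ / 4 ^ (m+1)) ^ t) ^ (t ^ m) := by
          rw [← pow_mul]
          congr 1
          rw [pow_succ]
          ring
        rw [h1]
        exact pow_le_pow_left₀ (by positivity) hbase _
      calc 2 * (t:ℝ) ≤ (δ / 4 ^ (m+1)) ^ (t ^ (m+1)) * n := hcond
        _ ≤ ((δ / 2) ^ t / 4 ^ m) ^ (t ^ m) * n :=
            mul_le_mul_of_nonneg_right hmono hn0.le
    have hc' : (δ / 2) ^ t * (n:ℝ) ^ k
        ≤ (((Fintype.piFinset V').filter fun e' => φ' e' = 0).card : ℝ) := by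
      rw [← hPdef, hfilter]
      exact hSbig
    obtain ⟨U', hU'sub, hU'card, hU'mono⟩ :=
      IH ((δ / 2) ^ t) hδ'0 hδ'1 t n ht hn hcond' V' hV' φ' 0 hc'
    refine ⟨Fin.snoc U' S, fun i => ?_, fun i => ?_, fun e he => ?_⟩
    · refine Fin.lastCases ?_ (fun j => ?_) i
      · simpa [Fin.snoc_last, hVl] using hSsub
      · simpa [Fin.snoc_castSucc] using hU'sub j
    · refine Fin.lastCases ?_ (fun j => ?_) i
      · simpa [Fin.snoc_last] using hScard
      · simpa [Fin.snoc_castSucc] using hU'card j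
    · have he' : Fin.init e ∈ Fintype.piFinset U' := by
        refine Fintype.mem_piFinset.2 fun j => ?_
        have := Fintype.mem_piFinset.1 he j.castSucc
        simpa [Fin.init, Fin.snoc_castSucc] using this
      have hlast : e (Fin.last k) ∈ S := by
        have := Fintype.mem_piFinset.1 he (Fin.last k)
        simpa [Fin.snoc_last] using this
      have h0 := hU'mono _ he'
      have hsub : S ⊆ Nb (Fin.init e) := by
        by_contra hcontra
        rw [hφ'] at h0
        simp only [hcontra, if_false] at h0
        exact one_ne_zero h0
      have hmem := hsub hlast
      rw [hNb, Finset.mem_filter] at hmem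
      have := hmem.2
      rwa [Fin.snoc_init_self] at this

/-- **Monochromatic copies from popular colours.**
Let `k ≥ 1`, `δ ∈ (0,1]`, and `t, n ≥ 1` with `(δ/4^(k-1))^(t^(k-1)) · n ≥ 2t`.
If `φ` is a colouring of the complete `k`-partite `k`-uniform hypergraph with all
classes `V i` of size `n` in which some colour `c` appears on at least `δ n^k` edges,
then there is a monochromatic copy of `K^(k)_{t,…,t}`: sets `U i ⊆ V i` of size `t`
such that `φ` is constant on the edges spanned by `U 1, …, U k`.
Edges are encoded as transversals `e : Fin k → ℕ` with `e i ∈ V i`. -/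
theorem monochromatic_copy_from_popular_colour (k : ℕ) (hk : 1 ≤ k)
    (δ : ℝ) (hδ : δ ∈ Set.Ioc (0 : ℝ) 1)
    (t n : ℕ) (ht : 1 ≤ t) (hn : 1 ≤ n)
    (hcond : (δ / 4 ^ (k - 1)) ^ (t ^ (k - 1)) * (n : ℝ) ≥ 2 * (t : ℝ))
    (V : Fin k → Finset ℕ) (hV : ∀ i, (V i).card = n)
    (φ : (Fin k → ℕ) → ℕ) (c : ℕ)
    (hc : δ * (n : ℝ) ^ k ≤
      (((Fintype.piFinset V).filter fun e => φ e = c).card : ℝ)) :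
    ∃ U : Fin k → Finset ℕ, (∀ i, U i ⊆ V i) ∧ (∀ i, (U i).card = t) ∧
      ∀ e ∈ Fintype.piFinset U, ∀ e' ∈ Fintype.piFinset U, φ e = φ e' := by
  obtain ⟨U, h1, h2, h3⟩ := aux_mono k hk δ hδ.1 hδ.2 t n ht hn hcond V hV φ c hc
  exact ⟨U, h1, h2, fun e he e' he' => (h3 e he).trans (h3 e' he').symm⟩
end
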